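/- arXiv:2406.00892 — 3 statements merged into one kernel-verified Lean document; each statement's English description precedes it below -/
import Mathlib

section
/- Let k be a field and G a finite group. A finite-dimensional kG-module M is faithful (i.e. the algebra map kG → End_k(M) is injective) if and only if the regular module kG is a direct summand of M^{⊕n} for some natural number n. -/
open MonoidAlgebra

section Aux

variable (k G : Type) [Field k] [Group G] [Fintype G]

/-- The group algebra of a finite group over a field is self-injective:
it satisfies Baer's criterion as a module over itself. -/
theorem baer_monoidAlgebra : Module.Baer (MonoidAlgebra k G) (MonoidAlgebra k G) := by
  intro I f
  -- the `k`-linear functional on `I` given by `x ↦ (f x) 1`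
  let ℓ₀ : (I.restrictScalars k) →ₗ[k] k :=
    (Finsupp.lapply (1 : G)).comp ((coeffLinearEquiv k).toLinearMap.comp (f.restrictScalars k))
  obtain ⟨ℓ, hℓ⟩ := LinearMap.exists_extend ℓ₀
  have hℓ' : ∀ (x : MonoidAlgebra k G) (hx : x ∈ I), ℓ x = (f ⟨x, hx⟩).coeff 1 := by
    intro x hx
    have := LinearMap.congr_fun hℓ ⟨x, hx⟩
    exact this
  have sy : ∀ (v : G → k) (h : G), (Finsupp.equivFunOnFinite.symm v) h = v h :=
    fun v h => rfl
  -- the candidate extension, as a `k`-linear map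
  let F₀ : MonoidAlgebra k G →ₗ[k] MonoidAlgebra k G :=
    { toFun := fun a => ofCoeff (Finsupp.equivFunOnFinite.symm (fun h => ℓ (single h⁻¹ 1 * a)))
      map_add' := by
        intro a b
        ext h
        rw [coeff_add, coeff_ofCoeff, coeff_ofCoeff, coeff_ofCoeff, sy, Finsupp.add_apply, sy, sy, mul_add, map_add]
      map_smul' := by
        intro t a
        ext h
        rw [coeff_smul, coeff_ofCoeff, coeff_ofCoeff, sy, Finsupp.smul_apply, sy, mul_smul_comm, map_smul, smul_eq_mul,
          RingHom.id_apply, smul_eq_mul] }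
  have F₀_apply : ∀ (a : MonoidAlgebra k G) (h : G), (F₀ a).coeff h = ℓ (single h⁻¹ 1 * a) := by
    intro a h; rfl
  have key : ∀ (g₀ : G) (a : MonoidAlgebra k G),
      F₀ (single g₀ 1 * a) = single g₀ 1 * F₀ a := by
    intro g₀ a
    ext h
    rw [F₀_apply, coeff_single_mul_apply (F₀ a) (1 : k) g₀ h, one_mul, F₀_apply,
      ← mul_assoc, single_mul_single, one_mul, mul_inv_rev, inv_inv]
  -- upgrade to a `MonoidAlgebra k G`-linear map
  let F : MonoidAlgebra k G →ₗ[MonoidAlgebra k G] MonoidAlgebra k G :=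
    { toFun := F₀
      map_add' := F₀.map_add
      map_smul' := by
        intro c a
        simp only [RingHom.id_apply, smul_eq_mul]
        induction c using MonoidAlgebra.induction_on with
        | of g => exact key g a
        | add b c hb hc => rw [add_mul, map_add, hb, hc, add_mul]
        | smul t c hc => rw [smul_mul_assoc, map_smul, hc, smul_mul_assoc] }
  refine ⟨F, ?_⟩
  intro x hx
  ext h
  have hmem : single h⁻¹ (1 : k) * x ∈ I := Ideal.mul_mem_left I _ hx
  have h1 : (⟨single h⁻¹ (1 : k) * x, hmem⟩ : I) = single h⁻¹ (1 : k) • ⟨x, hx⟩ := by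
    apply Subtype.ext
    simp [smul_eq_mul]
  have : (F x).coeff h = ℓ (single h⁻¹ 1 * x) := F₀_apply x h
  rw [this, hℓ' _ hmem, h1, map_smul]
  have : (single h⁻¹ (1 : k) • f ⟨x, hx⟩).coeff 1 = (single h⁻¹ (1 : k) * f ⟨x, hx⟩).coeff 1 := rfl
  rw [this, coeff_single_mul_apply]
  simp

end Aux

/-- Let `k` be a field and `G` a finite group. A finite-dimensional `kG`-module `M` is
faithful (its annihilator ideal in the group algebra `kG` is zero) if and only if the
regular module `kG` is a direct summand of `M^{⊕n}` for some natural number `n`. -/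
theorem stmt_2 (k G M : Type) [Field k] [Group G] [Fintype G]
    [AddCommGroup M] [Module (MonoidAlgebra k G) M] [Module k M]
    [IsScalarTower k (MonoidAlgebra k G) M] [SMulCommClass (MonoidAlgebra k G) k M]
    [FiniteDimensional k M] :
    Module.annihilator (MonoidAlgebra k G) M = ⊥ ↔
      ∃ (n : ℕ) (i : MonoidAlgebra k G →ₗ[MonoidAlgebra k G] (Fin n → M))
        (r : (Fin n → M) →ₗ[MonoidAlgebra k G] MonoidAlgebra k G),
        r.comp i = LinearMap.id := by
  constructor
  · intro hann
    -- pick a finite `k`-spanning family of `M`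
    obtain ⟨n, m, hm⟩ := Module.Finite.exists_fin (R := k) (M := M)
    -- the evaluation map `kG → M^n`
    let φ : MonoidAlgebra k G →ₗ[MonoidAlgebra k G] (Fin n → M) :=
      { toFun := fun a j => a • m j
        map_add' := fun a b => by funext j; exact add_smul a b (m j)
        map_smul' := fun c a => by funext j; exact mul_smul c a (m j) }
    have hφ : Function.Injective φ := by
      rw [← LinearMap.ker_eq_bot]
      rw [eq_bot_iff]
      intro a ha
      simp only [LinearMap.mem_ker] at ha
      have ha' : ∀ j, a • m j = 0 := fun j => congrFun ha j
      have : a ∈ Module.annihilator (MonoidAlgebra k G) M := by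
        rw [Module.mem_annihilator]
        intro x
        have hx : x ∈ Submodule.span k (Set.range m) := hm ▸ Submodule.mem_top
        induction hx using Submodule.span_induction with
        | mem y hy => obtain ⟨j, rfl⟩ := hy; exact ha' j
        | zero => exact smul_zero a
        | add y z _ _ hy hz => rw [smul_add, hy, hz, add_zero]
        | smul t y _ hy => rw [smul_comm, hy, smul_zero]
      rw [hann] at this
      simpa using this
    obtain ⟨r, hr⟩ := (baer_monoidAlgebra k G).extension_property φ hφ LinearMap.id
    exact ⟨n, φ, r, hr⟩
  · rintro ⟨n, i, r, hri⟩
    rw [eq_bot_iff]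
    intro a ha
    rw [Module.mem_annihilator] at ha
    have h1 : i a = a • i 1 := by rw [← map_smul, smul_eq_mul, mul_one]
    have h2 : a • i 1 = 0 := by
      funext j
      exact ha (i 1 j)
    have : a = r (i a) := (LinearMap.congr_fun hri a).symm
    rw [h1, h2, map_zero] at this
    simpa using this
end

section
/- Let k be a field, n ≥ 2, and let I be the two-sided ideal of the group algebra kS_n generated by the element 1 + (1 2) (where (1 2) is the transposition). Then I equals the kernel of the k-algebra homomorphism kS_n → k induced by the sign character of S_n. -/
open MonoidAlgebra

/-- Let `k` be a field, `n ≥ 2`, and let `I` be the two-sided ideal of the group algebra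
`kS_n` generated by the element `1 + (1 2)`. Then `I` equals the kernel of the `k`-algebra
homomorphism `kS_n → k` induced by the sign character of `S_n`. -/
theorem stmt_7 (k : Type) [Field k] (n : ℕ) (hn : 2 ≤ n) :
    TwoSidedIdeal.span
        {1 + MonoidAlgebra.of k (Equiv.Perm (Fin n))
            (Equiv.swap (⟨0, by omega⟩ : Fin n) (⟨1, by omega⟩ : Fin n))} =
      TwoSidedIdeal.ker
        (MonoidAlgebra.lift k k (Equiv.Perm (Fin n))
          ((Int.castRingHom k).toMonoidHom.comp
            ((Units.coeHom ℤ).comp Equiv.Perm.sign))) := by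
  set z0 : Fin n := ⟨0, by omega⟩
  set z1 : Fin n := ⟨1, by omega⟩
  have hz : z0 ≠ z1 := by
    intro h
    have := congrArg Fin.val h
    simp [z0, z1] at this
  set G := Equiv.Perm (Fin n)
  set F : G →* k := ((Int.castRingHom k).toMonoidHom.comp
      ((Units.coeHom ℤ).comp Equiv.Perm.sign))
  set φ := MonoidAlgebra.lift k k G F with hφ
  set S := TwoSidedIdeal.span
      {(1 : MonoidAlgebra k G) + MonoidAlgebra.of k G (Equiv.swap z0 z1)} with hS
  have hFswap : ∀ a b : Fin n, a ≠ b → F (Equiv.swap a b) = -1 := by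
    intro a b hab
    simp [F, Equiv.Perm.sign_swap hab]
  -- conjugates of the generator: all transpositions give elements of S
  have hswap : ∀ a b : Fin n, a ≠ b →
      (1 : MonoidAlgebra k G) + MonoidAlgebra.of k G (Equiv.swap a b) ∈ S := by
    intro a b hab
    obtain ⟨c, hc⟩ := isConj_iff.mp (Equiv.Perm.isConj_swap hz hab)
    have hgen : (1 : MonoidAlgebra k G) + MonoidAlgebra.of k G (Equiv.swap z0 z1) ∈ S :=
      TwoSidedIdeal.subset_span rfl
    have hmem := S.mul_mem_right _ (MonoidAlgebra.of k G c⁻¹)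
      (S.mul_mem_left (MonoidAlgebra.of k G c) _ hgen)
    have : MonoidAlgebra.of k G c *
        ((1 : MonoidAlgebra k G) + MonoidAlgebra.of k G (Equiv.swap z0 z1)) *
        MonoidAlgebra.of k G c⁻¹
        = 1 + MonoidAlgebra.of k G (Equiv.swap a b) := by
      rw [← hc]
      simp only [mul_add, add_mul, ← map_mul, mul_one, one_mul]
      rw [mul_inv_cancel, map_one]
    rwa [this] at hmem
  -- every group element is congruent to its sign mod S
  have hg : ∀ g : G, MonoidAlgebra.of k G g - F g • (1 : MonoidAlgebra k G) ∈ S := by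
    intro g
    refine Equiv.Perm.swap_induction_on g ?_ ?_
    · have : MonoidAlgebra.of k G 1 - F 1 • (1 : MonoidAlgebra k G) = 0 := by simp [MonoidAlgebra.one_def]
      rw [this]; exact S.zero_mem
    · intro f x y hxy ih
      have h1 : ((1 : MonoidAlgebra k G) + MonoidAlgebra.of k G (Equiv.swap x y)) *
          MonoidAlgebra.of k G f ∈ S := S.mul_mem_right _ _ (hswap x y hxy)
      have key : MonoidAlgebra.of k G (Equiv.swap x y * f)
          - F (Equiv.swap x y * f) • (1 : MonoidAlgebra k G)
          = ((1 : MonoidAlgebra k G) + MonoidAlgebra.of k G (Equiv.swap x y)) *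
              MonoidAlgebra.of k G f
            - (MonoidAlgebra.of k G f - F f • (1 : MonoidAlgebra k G)) := by
        have hFm : F (Equiv.swap x y * f) = -F f := by
          rw [map_mul, hFswap x y hxy]; ring
        rw [hFm, map_mul, add_mul, one_mul]
        module
      rw [key]
      exact S.sub_mem h1 ih
  -- the main congruence: x ≡ φ x mod S for every x
  have hx : ∀ x : MonoidAlgebra k G, x - φ x • (1 : MonoidAlgebra k G) ∈ S := by
    intro x
    induction x using MonoidAlgebra.induction_on with
    | of g =>
      have h2 : φ (MonoidAlgebra.of k G g) = F g := MonoidAlgebra.lift_of F g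
      rw [h2]; exact hg g
    | add f g hf hg' =>
      have : f + g - φ (f + g) • (1 : MonoidAlgebra k G)
          = (f - φ f • 1) + (g - φ g • 1) := by
        rw [map_add]; module
      rw [this]; exact S.add_mem hf hg'
    | smul r f hf =>
      have h3 : r • f - φ (r • f) • (1 : MonoidAlgebra k G)
          = r • (f - φ f • 1) := by
        rw [map_smul, smul_sub, smul_assoc]
      rw [h3, Algebra.smul_def]
      exact S.mul_mem_left _ _ hf
  apply le_antisymm
  · intro x hxS
    refine TwoSidedIdeal.mem_span_iff.mp hxS _ ?_
    intro y hy
    simp only [Set.mem_singleton_iff] at hy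
    subst hy
    rw [SetLike.mem_coe, TwoSidedIdeal.mem_ker]
    show φ _ = 0
    rw [map_add, map_one, MonoidAlgebra.lift_of, hFswap z0 z1 hz]
    ring
  · intro x hxk
    rw [TwoSidedIdeal.mem_ker] at hxk
    have := hx x
    rw [hxk] at this
    simpa using this
end

section
/- Let k be an algebraically closed field of characteristic 2 and let P be a Sylow 2-subgroup of S_4 (of order 8). Then the induced module Ind_P^{S_4} k is a semisimple kS_4-module of dimension 3, isomorphic to the direct sum of the trivial module and the unique 2-dimensional simple kS_4-module. -/
noncomputable section

variable (k : Type) [Field k]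

/-- The carrier of the induced representation `Ind_H^G M` along `φ : H →* G`:
functions `f : G → M` with `f (φ h * g) = ρ h (f g)`. -/
def IndCarrier {G H : Type} [Group G] [Group H] (φ : H →* G)
    {M : Type} [AddCommGroup M] [Module k M] (ρ : Representation k H M) :
    Submodule k (G → M) where
  carrier := {f | ∀ (h : H) (g : G), f (φ h * g) = ρ h (f g)}
  add_mem' := by
    intro f g hf hg h x
    simp only [Pi.add_apply, hf h x, hg h x, map_add]
  zero_mem' := by
    intro h x
    simp
  smul_mem' := by
    intro c f hf h x
    simp only [Pi.smul_apply, hf h x, map_smul]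

/-- The induced representation `Ind_H^G M`, with `G` acting by right translation. -/
def IndRep {G H : Type} [Group G] [Group H] (φ : H →* G)
    {M : Type} [AddCommGroup M] [Module k M] (ρ : Representation k H M) :
    Representation k G ↥(IndCarrier k φ ρ) where
  toFun σ :=
    { toFun := fun f => ⟨fun g => (f : G → M) (g * σ), fun h g => by
        show (f : G → M) (φ h * g * σ) = ρ h ((f : G → M) (g * σ))
        rw [mul_assoc]
        exact f.2 h (g * σ)⟩
      map_add' := fun f g => by ext x; rfl
      map_smul' := fun c f => by ext x; rfl }
  map_one' := by
    ext f g
    simp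
  map_mul' := fun σ τ => by
    ext f g
    show (f : G → M) (g * (σ * τ)) = (f : G → M) (g * σ * τ)
    rw [mul_assoc]

/-- Transport of permutations along an equivalence, as a monoid homomorphism. -/
def permMapHom {α β : Type} (e : α ≃ β) : Equiv.Perm α →* Equiv.Perm β where
  toFun σ := (e.symm.trans σ).trans e
  map_one' := by ext x; simp
  map_mul' σ τ := by ext x; simp

/-- The Young subgroup of `S_n` associated with a composition `c` of `n`:
permutations preserving each block. -/
def youngSubgroup {n : ℕ} (c : Composition n) : Subgroup (Equiv.Perm (Fin n)) where
  carrier := {σ | ∀ i : Fin n, c.index (σ i) = c.index i}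
  one_mem' := fun i => rfl
  mul_mem' := by
    intro a b ha hb i
    rw [Equiv.Perm.mul_apply, ha, hb]
  inv_mem' := by
    intro a ha i
    have := ha (a⁻¹ i)
    rw [show a (a⁻¹ i) = i by simp] at this
    exact this.symm

/-- The permutation module `M^c = Ind_{S_c}^{S_n} k` of a composition `c`, realized as
the space of functions on `S_n` invariant under left translation by the Young
subgroup. -/
def permutationModule {n : ℕ} (c : Composition n) : Submodule k (Equiv.Perm (Fin n) → k) :=
  IndCarrier k (youngSubgroup c).subtype (1 : Representation k ↥(youngSubgroup c) k)

/-- the `S_n`-action on the permutation module. -/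
def permutationRep {n : ℕ} (c : Composition n) :
    Representation k (Equiv.Perm (Fin n)) ↥(permutationModule k c) :=
  IndRep k (youngSubgroup c).subtype (1 : Representation k ↥(youngSubgroup c) k)

/-- The module `Ind_H^G k` induced from the trivial representation of a subgroup,
i.e. the permutation module on cosets. -/
def cosetModule {G : Type} [Group G] (H : Subgroup G) : Submodule k (G → k) :=
  IndCarrier k H.subtype (1 : Representation k ↥H k)

/-- The `G`-action on `Ind_H^G k`. -/
def cosetRep {G : Type} [Group G] (H : Subgroup G) :
    Representation k G ↥(cosetModule k H) :=
  IndRep k H.subtype (1 : Representation k ↥H k)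

end


noncomputable section Aux2

open QuotientGroup

variable {k : Type} [Field k] {G : Type} [Group G] (H : Subgroup G)

/-- Functions on `G` invariant under left `H`-translation are the same as functions
on the right coset space. -/
def cosetEquiv : ↥(cosetModule k H) ≃ₗ[k] (Quotient (QuotientGroup.rightRel H) → k) where
  toFun f q := Quotient.liftOn q (f : G → k) (fun a b hab => by
    have hm : b * a⁻¹ ∈ H := (QuotientGroup.rightRel_apply).mp hab
    have := f.2 ⟨b * a⁻¹, hm⟩ a
    simpa [inv_mul_cancel_right] using this.symm)
  map_add' f g := by ext q; induction q using Quotient.ind; rfl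
  map_smul' c f := by ext q; induction q using Quotient.ind; rfl
  invFun φ := ⟨fun g => φ ⟦g⟧, fun h g => by
    have : (⟦(h : G) * g⟧ : Quotient (QuotientGroup.rightRel H)) = ⟦g⟧ :=
      Quotient.sound ((QuotientGroup.rightRel_apply).mpr (by
        simp [mul_inv_rev, mul_assoc, H.inv_mem h.2]))
    show φ ⟦(h : G) * g⟧ = _
    rw [this]; rfl⟩
  left_inv f := by ext g; rfl
  right_inv φ := by ext q; induction q using Quotient.ind; rfl

end Aux2


section Key

open QuotientGroup

theorem key_lemma {k : Type} [Field k] [CharP k 2] {G : Type} [Group G] [Fintype G]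
    (H : Subgroup G) (hidx : H.index = 3)
    (hgen : Subgroup.closure {σ : G | σ * σ = 1} = (⊤ : Subgroup G)) :
    Module.finrank k ↥(cosetModule k H) = 3 ∧
    ∃ U₁ U₂ : Submodule k ↥(cosetModule k H),
      IsCompl U₁ U₂ ∧
      (∀ g, U₁.map (cosetRep k H g) ≤ U₁) ∧
      (∀ g, U₂.map (cosetRep k H g) ≤ U₂) ∧
      Module.finrank k ↥U₁ = 1 ∧
      (∀ g, ∀ x ∈ U₁, cosetRep k H g x = x) ∧
      Module.finrank k ↥U₂ = 2 ∧ U₂ ≠ ⊥ ∧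
      (∀ W : Submodule k ↥(cosetModule k H),
        W ≤ U₂ → (∀ g, W.map (cosetRep k H g) ≤ W) →
        W = ⊥ ∨ W = U₂) := by
  classical
  have h2 : (1 : k) + 1 = 0 := by
    have := CharP.cast_eq_zero k 2
    rwa [Nat.cast_ofNat, ← one_add_one_eq_two] at this
  have hneg : (-1 : k) = 1 := by linear_combination -h2
  set V := ↥(cosetModule k H) with hV
  set Q := Quotient (QuotientGroup.rightRel H) with hQdef
  letI : Fintype Q := Fintype.ofFinite _
  set e : V ≃ₗ[k] (Q → k) := cosetEquiv H with he
  set rep := cosetRep k H with hrep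
  -- basic facts about the representation
  have hrep_apply : ∀ (g : G) (f : V) (x : G), ((rep g f : V) : G → k) x = (f : G → k) (x * g) :=
    fun g f x => rfl
  have hcardQ : Fintype.card Q = 3 := by
    rw [← Nat.card_eq_fintype_card,
      Nat.card_congr (QuotientGroup.quotientRightRelEquivQuotientLeftRel (s := H))]
    exact hidx
  letI : FiniteDimensional k V := by
    have : FiniteDimensional k (G → k) := inferInstance
    exact FiniteDimensional.finiteDimensional_submodule (cosetModule k H)
  have hdim : Module.finrank k V = 3 := by
    rw [e.finrank_eq, Module.finrank_pi, hcardQ]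
  -- the summation functional
  let T : V →ₗ[k] k :=
    { toFun := fun f => ∑ q : Q, e f q
      map_add' := fun f g => by simp [Finset.sum_add_distrib]
      map_smul' := fun c f => by simp [Finset.mul_sum] }
  -- constant function 1
  let oneV : V := ⟨fun _ => (1 : k), fun h g => rfl⟩
  have honeV_ne : oneV ≠ 0 := by
    intro h
    have : ((oneV : V) : G → k) 1 = 0 := by rw [h]; rfl
    exact one_ne_zero this
  have he_one : ∀ q : Q, e oneV q = 1 := by
    intro q; induction q using Quotient.ind; rfl
  have h3 : (3 : k) = 1 := by linear_combination h2
  have hT1 : T oneV = 1 := by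
    show (∑ q : Q, e oneV q) = 1
    rw [Finset.sum_congr rfl (fun q _ => he_one q), Finset.sum_const, Finset.card_univ,
      hcardQ, nsmul_eq_mul, mul_one]
    exact_mod_cast h3
  -- equivariance of T
  have hTequiv : ∀ (g : G) (f : V), T (rep g f) = T f := by
    intro g f
    have hrelmul : ∀ (g' : G) (a b : G), (QuotientGroup.rightRel H) a b →
        (QuotientGroup.rightRel H) (a * g') (b * g') := by
      intro g' a b hab
      rw [QuotientGroup.rightRel_apply] at hab ⊢
      simpa [mul_assoc] using hab
    let σ : Q ≃ Q :=
      { toFun := Quotient.map (· * g) (hrelmul g)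
        invFun := Quotient.map (· * g⁻¹) (hrelmul g⁻¹)
        left_inv := by rintro ⟨x⟩; exact congrArg (Quotient.mk _) (mul_inv_cancel_right x g)
        right_inv := by rintro ⟨x⟩; exact congrArg (Quotient.mk _) (inv_mul_cancel_right x g) }
    have hpt : ∀ q : Q, e (rep g f) q = e f (σ q) := by
      intro q; induction q using Quotient.ind; rfl
    show (∑ q : Q, e (rep g f) q) = ∑ q : Q, e f q
    rw [Finset.sum_congr rfl (fun q _ => hpt q)]
    exact Equiv.sum_comp σ (e f)
  -- the submodules
  set U₁ : Submodule k V := Submodule.span k {oneV} with hU₁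
  set U₂ : Submodule k V := LinearMap.ker T with hU₂
  have hT_smul_one : ∀ c : k, T (c • oneV) = c := by
    intro c; rw [map_smul, hT1, smul_eq_mul, mul_one]
  -- trivial action on U₁
  have hU₁triv : ∀ g, ∀ x ∈ U₁, rep g x = x := by
    intro g x hx
    obtain ⟨c, rfl⟩ := Submodule.mem_span_singleton.mp hx
    rw [map_smul]
    have h' : rep g oneV = oneV := Subtype.ext (funext fun x => rfl)
    rw [h']
  have hU₁inv : ∀ g, U₁.map (rep g) ≤ U₁ := by
    rintro g _ ⟨x, hx, rfl⟩
    rw [hU₁triv g x hx]; exact hx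
  have hU₂inv : ∀ g, U₂.map (rep g) ≤ U₂ := by
    rintro g _ ⟨x, hx, rfl⟩
    have : T x = 0 := hx
    show T (rep g x) = 0
    rw [hTequiv g x, this]
  -- dimensions
  have hdimU₁ : Module.finrank k ↥U₁ = 1 := finrank_span_singleton honeV_ne
  have hTsurj : LinearMap.range T = ⊤ := by
    rw [LinearMap.range_eq_top]
    intro c
    exact ⟨c • oneV, hT_smul_one c⟩
  have hdimU₂ : Module.finrank k ↥U₂ = 2 := by
    have := LinearMap.finrank_range_add_finrank_ker T
    rw [hTsurj, finrank_top, Module.finrank_self, hdim] at this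
    rw [hU₂]
    omega
  have hdisj : Disjoint U₁ U₂ := by
    rw [Submodule.disjoint_def]
    intro x hx1 hx2
    obtain ⟨c, rfl⟩ := Submodule.mem_span_singleton.mp hx1
    have : T (c • oneV) = 0 := hx2
    rw [hT_smul_one] at this
    rw [this, zero_smul]
  have hcompl : IsCompl U₁ U₂ := by
    refine ⟨hdisj, codisjoint_iff.mpr ?_⟩
    apply Submodule.eq_top_of_finrank_eq
    have := Submodule.finrank_sup_add_finrank_inf_eq U₁ U₂
    rw [hdisj.eq_bot, finrank_bot, hdimU₁, hdimU₂] at this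
    rw [hdim]
    omega
  refine ⟨hdim, U₁, U₂, hcompl, hU₁inv, hU₂inv, hdimU₁, hU₁triv, hdimU₂, ?_, ?_⟩
  · intro hbot
    rw [hbot, finrank_bot] at hdimU₂
    omega
  -- simplicity of U₂
  intro W hWle hWinv
  by_cases hWbot : W = ⊥
  · exact Or.inl hWbot
  right
  have hWpos : 0 < Module.finrank k ↥W := by
    rcases Nat.eq_zero_or_pos (Module.finrank k ↥W) with h0 | h
    · exact absurd (Submodule.finrank_eq_zero.mp h0) hWbot
    · exact h
  have hWle2 : Module.finrank k ↥W ≤ 2 := hdimU₂ ▸ Submodule.finrank_mono hWle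
  rcases Nat.lt_or_ge (Module.finrank k ↥W) 2 with hlt | hge
  · -- finrank W = 1 : derive a contradiction
    exfalso
    have hW1 : Module.finrank k ↥W = 1 := by omega
    obtain ⟨f, hfW, hfne⟩ := Submodule.exists_mem_ne_zero_of_ne_bot hWbot
    have hWspan : W = Submodule.span k {f} := by
      symm
      apply Submodule.eq_of_le_of_finrank_eq
      · rw [Submodule.span_le, Set.singleton_subset_iff]; exact hfW
      · rw [hW1, finrank_span_singleton hfne]
    -- for every g, rep g f is a multiple of f
    have hmul : ∀ g : G, ∃ c : k, rep g f = c • f := by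
      intro g
      have : rep g f ∈ W := hWinv g ⟨f, hfW, rfl⟩
      rw [hWspan] at this
      obtain ⟨c, hc⟩ := Submodule.mem_span_singleton.mp this
      exact ⟨c, hc.symm⟩
    have hfix_inv : ∀ g : G, g * g = 1 → rep g f = f := by
      intro g hg
      obtain ⟨c, hc⟩ := hmul g
      have hsq : (c * c) • f = f := by
        have h' : rep g (rep g f) = f := by
          rw [← Module.End.mul_apply, ← map_mul, hg, map_one, Module.End.one_apply]
        rw [hc, map_smul, hc, smul_smul] at h'
        exact h'
      have hc2 : c * c = 1 := smul_left_injective k hfne (by show (c * c) • f = (1 : k) • f; rw [one_smul]; exact hsq)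
      have hc1 : c = 1 := by
        have h4 : (c + 1) * (c + 1) = 0 := by linear_combination hc2 + c * h2 + h2
        have h5 := mul_self_eq_zero.mp h4
        linear_combination h5 + hneg
      rw [hc, hc1, one_smul]
    have hfix : ∀ g : G, rep g f = f := by
      intro g
      have hg : g ∈ Subgroup.closure {σ : G | σ * σ = 1} := by rw [hgen]; trivial
      induction hg using Subgroup.closure_induction with
      | mem x hx => exact hfix_inv x hx
      | one => rw [map_one, Module.End.one_apply]
      | mul x y _ _ hx hy => rw [map_mul, Module.End.mul_apply, hy, hx]
      | inv x _ hx =>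
          have := congrArg (rep x⁻¹) hx.symm
          rwa [← Module.End.mul_apply, ← map_mul, inv_mul_cancel, map_one,
            Module.End.one_apply] at this
    -- hence f is constant
    have hconst : ∀ x : G, (f : G → k) x = (f : G → k) 1 := by
      intro x
      have := congrFun (congrArg (Subtype.val) (hfix x)) 1
      rw [hrep_apply] at this
      rw [← this, one_mul]
    have hTf : T f = 0 := hWle hfW
    have hef : ∀ q : Q, e f q = (f : G → k) 1 := by
      intro q; induction q using Quotient.ind with | _ x => exact hconst x
    have hf1 : (f : G → k) 1 = 0 := by
      have : (∑ q : Q, e f q) = 0 := hTf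
      rw [Finset.sum_congr rfl (fun q _ => hef q), Finset.sum_const, Finset.card_univ,
        hcardQ, nsmul_eq_mul] at this
      push_cast at this
      rw [h3, one_mul] at this
      exact this
    exact hfne (Subtype.ext (funext fun x => by rw [hconst x, hf1]; rfl))
  · -- finrank W = 2
    exact Submodule.eq_of_le_of_finrank_eq hWle (by rw [hdimU₂]; omega)


end Key

/-- Let `k` be an algebraically closed field of characteristic 2 and let `P` be a
Sylow 2-subgroup of `S_4` (of order 8). Then the induced module `Ind_P^{S_4} k` is a
semisimple `kS_4`-module of dimension 3, isomorphic to the direct sum of the trivial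
module and the unique 2-dimensional simple `kS_4`-module: it decomposes as
`U₁ ⊕ U₂` with `U₁` a 1-dimensional subrepresentation with trivial action and `U₂`
a 2-dimensional simple subrepresentation. -/
theorem stmt_14 (k : Type) [Field k] [IsAlgClosed k] [CharP k 2]
    (P : Sylow 2 (Equiv.Perm (Fin 4))) :
    Module.finrank k ↥(cosetModule k (P : Subgroup (Equiv.Perm (Fin 4)))) = 3 ∧
    ∃ U₁ U₂ : Submodule k ↥(cosetModule k (P : Subgroup (Equiv.Perm (Fin 4)))),
      IsCompl U₁ U₂ ∧
      (∀ g, U₁.map (cosetRep k (P : Subgroup (Equiv.Perm (Fin 4))) g) ≤ U₁) ∧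
      (∀ g, U₂.map (cosetRep k (P : Subgroup (Equiv.Perm (Fin 4))) g) ≤ U₂) ∧
      Module.finrank k ↥U₁ = 1 ∧
      (∀ g, ∀ x ∈ U₁, cosetRep k (P : Subgroup (Equiv.Perm (Fin 4))) g x = x) ∧
      Module.finrank k ↥U₂ = 2 ∧ U₂ ≠ ⊥ ∧
      (∀ W : Submodule k ↥(cosetModule k (P : Subgroup (Equiv.Perm (Fin 4)))),
        W ≤ U₂ → (∀ g, W.map (cosetRep k (P : Subgroup (Equiv.Perm (Fin 4))) g) ≤ W) →
        W = ⊥ ∨ W = U₂) := by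
  have hfact : Fact (Nat.Prime 2) := ⟨Nat.prime_two⟩
  have hcardG : Nat.card (Equiv.Perm (Fin 4)) = 24 := by
    simp [Nat.card_eq_fintype_card, Fintype.card_perm]
    rfl
  have hcardP : Nat.card ↥(P : Subgroup (Equiv.Perm (Fin 4))) = 8 := by
    have h := P.card_eq_multiplicity
    rw [hcardG] at h
    rw [h, show Nat.factorization 24 2 = 3 by
      rw [show (24:ℕ) = 2^3 * 3 by norm_num,
        Nat.factorization_mul (by norm_num) (by norm_num),
        Nat.Prime.factorization_pow Nat.prime_two]
      simp [Nat.Prime.factorization, Nat.prime_three]]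
    norm_num
  have hidx : (P : Subgroup (Equiv.Perm (Fin 4))).index = 3 := by
    have h := Subgroup.card_mul_index (P : Subgroup (Equiv.Perm (Fin 4)))
    rw [hcardP, hcardG] at h
    omega
  have hgen : Subgroup.closure {σ : Equiv.Perm (Fin 4) | σ * σ = 1} = ⊤ := by
    rw [eq_top_iff, ← Equiv.Perm.closure_isSwap]
    apply Subgroup.closure_mono
    rintro σ ⟨x, y, hxy, rfl⟩
    exact Equiv.swap_mul_self x y
  exact key_lemma _ hidx hgen
end
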